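/- Let h, r be real numbers with h ≠ 0 and h² + r² ≠ 1, and define ψ : ℝ → ℝ³ componentwise by ψ₁(θ) = (h·e^{θ/h}/(h²+r²-1))·(cosh(√(h²+r²)θ/h) - sinh(√(h²+r²)θ/h)/√(h²+r²)), ψ₂(θ) = (h·e^{θ/h}/(h²+r²-1))·(sinh(√(h²+r²)θ/h) - cosh(√(h²+r²)θ/h)/√(h²+r²)), ψ₃(θ) = r·e^{θ/h}/√(h²+r²). Then with s = e^{θ/h}, ψ is a unit-speed spacelike curve in E₁³ (g(dψ/ds, dψ/ds) = 1) and its tangent dψ/ds has constant third component r/√(h²+r²). -/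

import Mathlib

noncomputable section
open Real

/-- Lorentzian metric of Minkowski 3-space E₁³. -/
def g (u v : ℝ × ℝ × ℝ) : ℝ := -(u.1 * v.1) + u.2.1 * v.2.1 + u.2.2 * v.2.2

theorem stmt11 (h r : ℝ) (hh : h ≠ 0) (hhr : h ^ 2 + r ^ 2 ≠ 1)
    (ψ : ℝ → ℝ × ℝ × ℝ)
    (hψ : ∀ θ, ψ θ =
      ((h * Real.exp (θ / h) / (h ^ 2 + r ^ 2 - 1)) *
        (Real.cosh (Real.sqrt (h ^ 2 + r ^ 2) * θ / h)
          - Real.sinh (Real.sqrt (h ^ 2 + r ^ 2) * θ / h) / Real.sqrt (h ^ 2 + r ^ 2)),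
       (h * Real.exp (θ / h) / (h ^ 2 + r ^ 2 - 1)) *
        (Real.sinh (Real.sqrt (h ^ 2 + r ^ 2) * θ / h)
          - Real.cosh (Real.sqrt (h ^ 2 + r ^ 2) * θ / h) / Real.sqrt (h ^ 2 + r ^ 2)),
       r * Real.exp (θ / h) / Real.sqrt (h ^ 2 + r ^ 2)))
    (ψs : ℝ → ℝ × ℝ × ℝ)
    (hrep : ∀ s, ψs s = ψ (h * Real.log s)) :
    ∀ s, 0 < s →
      g (deriv ψs s) (deriv ψs s) = 1 ∧
      (deriv ψs s).2.2 = r / Real.sqrt (h ^ 2 + r ^ 2) := by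
  intro s hs
  have hs' : s ≠ 0 := ne_of_gt hs
  set m := Real.sqrt (h ^ 2 + r ^ 2) with hmdef
  have hpos : (0:ℝ) < h ^ 2 + r ^ 2 := by positivity
  have hm2 : m ^ 2 = h ^ 2 + r ^ 2 := Real.sq_sqrt hpos.le
  have hm : m ≠ 0 := by
    intro h0
    rw [h0] at hm2
    simp at hm2
    nlinarith
  have hc : h ^ 2 + r ^ 2 - 1 ≠ 0 := sub_ne_zero.mpr hhr
  set c := h ^ 2 + r ^ 2 - 1 with hcdef
  -- local explicit formula
  have hloc : ψs =ᶠ[nhds s] (fun t =>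
      (h * t / c * (Real.cosh (m * Real.log t) - Real.sinh (m * Real.log t) / m),
       h * t / c * (Real.sinh (m * Real.log t) - Real.cosh (m * Real.log t) / m),
       r * t / m)) := by
    filter_upwards [eventually_gt_nhds hs] with t ht
    have ht' : t ≠ 0 := ne_of_gt ht
    rw [hrep, hψ]
    have e1 : h * Real.log t / h = Real.log t := by field_simp
    have e2 : m * (h * Real.log t) / h = m * Real.log t := by field_simp
    rw [e1, e2, Real.exp_log ht]
  -- derivatives
  have hlog : HasDerivAt Real.log s⁻¹ s := Real.hasDerivAt_log hs'
  have hml : HasDerivAt (fun t => m * Real.log t) (m * s⁻¹) s := hlog.const_mul m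
  have hch : HasDerivAt (fun t => Real.cosh (m * Real.log t))
      (Real.sinh (m * Real.log s) * (m * s⁻¹)) s := (Real.hasDerivAt_cosh _).comp s hml
  have hsh : HasDerivAt (fun t => Real.sinh (m * Real.log t))
      (Real.cosh (m * Real.log s) * (m * s⁻¹)) s := (Real.hasDerivAt_sinh _).comp s hml
  have hlin : HasDerivAt (fun t : ℝ => h * t / c) (h * 1 / c) s :=
    ((hasDerivAt_id s).const_mul h).div_const c
  have hlin3 : HasDerivAt (fun t : ℝ => r * t / m) (r * 1 / m) s :=
    ((hasDerivAt_id s).const_mul r).div_const m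
  have h1 : HasDerivAt (fun t => h * t / c * (Real.cosh (m * Real.log t) - Real.sinh (m * Real.log t) / m))
      (h * 1 / c * (Real.cosh (m * Real.log s) - Real.sinh (m * Real.log s) / m)
        + h * s / c * (Real.sinh (m * Real.log s) * (m * s⁻¹)
            - Real.cosh (m * Real.log s) * (m * s⁻¹) / m)) s := by
    exact hlin.mul (hch.sub (hsh.div_const m))
  have h2 : HasDerivAt (fun t => h * t / c * (Real.sinh (m * Real.log t) - Real.cosh (m * Real.log t) / m))
      (h * 1 / c * (Real.sinh (m * Real.log s) - Real.cosh (m * Real.log s) / m)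
        + h * s / c * (Real.cosh (m * Real.log s) * (m * s⁻¹)
            - Real.sinh (m * Real.log s) * (m * s⁻¹) / m)) s := by
    exact hlin.mul (hsh.sub (hch.div_const m))
  have hF : HasDerivAt ψs
      (h * 1 / c * (Real.cosh (m * Real.log s) - Real.sinh (m * Real.log s) / m)
        + h * s / c * (Real.sinh (m * Real.log s) * (m * s⁻¹)
            - Real.cosh (m * Real.log s) * (m * s⁻¹) / m),
       h * 1 / c * (Real.sinh (m * Real.log s) - Real.cosh (m * Real.log s) / m)
        + h * s / c * (Real.cosh (m * Real.log s) * (m * s⁻¹)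
            - Real.sinh (m * Real.log s) * (m * s⁻¹) / m),
       r * 1 / m) s := by
    exact (h1.prodMk (h2.prodMk hlin3)).congr_of_eventuallyEq hloc
  rw [hF.deriv]
  have hcs := Real.cosh_sq_sub_sinh_sq (m * Real.log s)
  set C := Real.cosh (m * Real.log s)
  set S := Real.sinh (m * Real.log s)
  have hm1 : m ^ 2 - 1 ≠ 0 := by rw [hm2]; exact hc
  have d1 : h * 1 / c * (C - S / m) + h * s / c * (S * (m * s⁻¹) - C * (m * s⁻¹) / m)
      = h * S / m := by
    simp only [hcdef, ← hm2]
    field_simp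
    ring
  have d2 : h * 1 / c * (S - C / m) + h * s / c * (C * (m * s⁻¹) - S * (m * s⁻¹) / m)
      = h * C / m := by
    simp only [hcdef, ← hm2]
    field_simp
    ring
  constructor
  · show -(_ * _) + _ * _ + _ * _ = 1
    rw [d1, d2]
    have : -(h * S / m * (h * S / m)) + h * C / m * (h * C / m) + r * 1 / m * (r * 1 / m)
        = (h ^ 2 * (C ^ 2 - S ^ 2) + r ^ 2) / m ^ 2 := by field_simp; ring
    rw [this, hcs, hm2]
    field_simp
  · show r * 1 / m = r / m
    ring
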